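/- If f: ℝᵐ → ℝ is strongly convex with parameter l > 0 and A ∈ ℝ^{m×n} is any matrix, then F(x) := f(Ax) is optimally strongly convex with respect to its solution set S: for all x, F(x) − F(P_S(x)) ≥ (l·c/2)·‖x − P_S(x)‖² for some constant c > 0 depending on A, where P_S is the Euclidean projection onto the (assumed nonempty) set S of minimizers of F. -/

import Mathlib

set_option maxHeartbeats 1000000


private lemma aux_orth {E : Type*} [NormedAddCommGroup E] [InnerProductSpace ℝ E]
    (K : Submodule ℝ E) (v : E) (h : ∀ w ∈ K, ‖v‖ ≤ ‖v - w‖) : v ∈ Kᗮ := by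
  rw [Submodule.mem_orthogonal]
  intro w hw
  rw [real_inner_comm]
  by_cases hw0 : w = 0
  · simp [hw0]
  have hb : (0:ℝ) < ‖w‖ ^ 2 := pow_pos (norm_pos_iff.mpr hw0) 2
  have hbne : ‖w‖ ^ 2 ≠ 0 := ne_of_gt hb
  set a : ℝ := inner ℝ v w with ha
  have key : ∀ t : ℝ, 0 ≤ -2 * (t * a) + t ^ 2 * ‖w‖ ^ 2 := by
    intro t
    have h1 := h (t • w) (K.smul_mem t hw)
    have h2 : ‖v - t • w‖ ^ 2 = ‖v‖ ^ 2 - 2 * (t * a) + t ^ 2 * ‖w‖ ^ 2 := by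
      rw [norm_sub_sq_real, real_inner_smul_right, norm_smul]
      rw [mul_pow, ← ha]
      simp only [Real.norm_eq_abs, sq_abs]
    nlinarith [norm_nonneg v, norm_nonneg (v - t • w)]
  have e : -2 * (a / ‖w‖ ^ 2 * a) + (a / ‖w‖ ^ 2) ^ 2 * ‖w‖ ^ 2 = -(a ^ 2 / ‖w‖ ^ 2) := by
    field_simp
    ring
  have hk : (0:ℝ) ≤ -(a ^ 2 / ‖w‖ ^ 2) := by rw [← e]; exact key (a / ‖w‖ ^ 2)
  have h9 : a ^ 2 / ‖w‖ ^ 2 ≤ 0 := by linarith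
  have h10 : a ^ 2 = a ^ 2 / ‖w‖ ^ 2 * ‖w‖ ^ 2 := by field_simp
  have ha2 : a ^ 2 ≤ 0 := by nlinarith
  exact sq_eq_zero_iff.mp (le_antisymm ha2 (sq_nonneg a))

theorem stmt_5 {m n : ℕ} (f : EuclideanSpace ℝ (Fin m) → ℝ) (l : ℝ) (hl : 0 < l)
    (hf : StrongConvexOn Set.univ l f) (A : Matrix (Fin m) (Fin n) ℝ)
    (F : EuclideanSpace ℝ (Fin n) → ℝ) (hF : ∀ x, F x = f (WithLp.toLp 2 (A.mulVec x)))
    (S : Set (EuclideanSpace ℝ (Fin n))) (hS : S = {x | ∀ y, F x ≤ F y})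
    (hSne : S.Nonempty)
    (proj : EuclideanSpace ℝ (Fin n) → EuclideanSpace ℝ (Fin n))
    (hproj : ∀ x, proj x ∈ S ∧ ∀ y ∈ S, ‖x - proj x‖ ≤ ‖x - y‖) :
    ∃ c : ℝ, 0 < c ∧ ∀ x, F x - F (proj x) ≥ l * c / 2 * ‖x - proj x‖ ^ 2 := by
  classical
  set T : EuclideanSpace ℝ (Fin n) →ₗ[ℝ] EuclideanSpace ℝ (Fin m) :=
    Matrix.toEuclideanLin A with hTdef
  have hFT : ∀ x, F x = f (T x) := hF
  obtain ⟨x₀, hx₀⟩ := hSne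
  have hmin : ∀ z ∈ S, ∀ y, F z ≤ F y := by
    intro z hz; rw [hS] at hz; exact hz
  -- key strong convexity estimate
  have hkey : ∀ z w : EuclideanSpace ℝ (Fin n),
      F ((1/2 : ℝ) • z + (1/2 : ℝ) • w) ≤
        (1/2) * F z + (1/2) * F w - (1/2) * (1/2) * (l / 2 * ‖T z - T w‖ ^ 2) := by
    intro z w
    have h := hf.2 (Set.mem_univ (T z)) (Set.mem_univ (T w))
      (by norm_num : (0:ℝ) ≤ 1/2) (by norm_num : (0:ℝ) ≤ 1/2) (by norm_num)
    have hmid : (1/2 : ℝ) • T z + (1/2 : ℝ) • T w = T ((1/2 : ℝ) • z + (1/2 : ℝ) • w) := by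
      simp [map_add, map_smul]
    rw [hmid] at h
    simpa [hFT, smul_eq_mul] using h
  -- A x is constant on S
  have hconst : ∀ z ∈ S, T z = T x₀ := by
    intro z hz
    have h1 := hkey z x₀
    have h2 : F x₀ ≤ F ((1/2 : ℝ) • z + (1/2 : ℝ) • x₀) := hmin x₀ hx₀ _
    have h3 : F z ≤ F x₀ := hmin z hz _
    have h4 : F x₀ ≤ F z := hmin x₀ hx₀ _
    have h6 : ‖T z - T x₀‖ ^ 2 ≤ 0 := by nlinarith
    have h7 : ‖T z - T x₀‖ = 0 := by nlinarith [norm_nonneg (T z - T x₀)]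
    exact sub_eq_zero.mp (norm_eq_zero.mp h7)
  -- characterization of S
  have hSchar : ∀ z, T z = T x₀ → z ∈ S := by
    intro z hz
    rw [hS]
    intro y
    have : F z = F x₀ := by rw [hFT, hFT, hz]
    rw [this]
    exact hmin x₀ hx₀ y
  -- Hoffman-type bound
  obtain ⟨K, hK, hanti⟩ :=
    (T.comp (LinearMap.ker T)ᗮ.subtype).exists_antilipschitzWith (by
      rw [LinearMap.ker_eq_bot']
      rintro ⟨w, hw⟩ h0
      have hwk : w ∈ LinearMap.ker T := h0
      have h1 : (inner ℝ w w : ℝ) = 0 :=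
        (Submodule.mem_orthogonal _ w).mp hw w hwk
      exact Subtype.ext (inner_self_eq_zero.mp h1))
  refine ⟨1 / (2 * (K : ℝ) ^ 2), by positivity, ?_⟩
  intro x
  set p := proj x with hp
  have hpS : p ∈ S := (hproj x).1
  set v := x - p with hv
  -- v is orthogonal to ker T
  have hvorth : v ∈ (LinearMap.ker T)ᗮ := by
    apply aux_orth
    intro w hw
    have hmem : p + w ∈ S := by
      apply hSchar
      rw [map_add, LinearMap.mem_ker.mp hw, add_zero, hconst p hpS]
    have h := (hproj x).2 _ hmem
    have heq : x - (p + w) = v - w := by rw [hv]; abel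
    rw [heq] at h
    exact h
  -- antilipschitz bound
  have hlow : ‖v‖ ≤ (K : ℝ) * ‖T v‖ := by
    have h := hanti.le_mul_dist (⟨v, hvorth⟩ : (LinearMap.ker T)ᗮ) 0
    simpa [dist_eq_norm, Submodule.coe_norm] using h
  -- strong convexity bound
  have h1 := hkey x p
  have h2 : F p ≤ F ((1/2 : ℝ) • x + (1/2 : ℝ) • p) := hmin p hpS _
  have h3 : F x - F p ≥ l / 4 * ‖T x - T p‖ ^ 2 := by nlinarith
  have hTv : T x - T p = T v := (map_sub T x p).symm
  rw [hTv] at h3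
  have hK2 : (0 : ℝ) < (K : ℝ) := hK
  have hineq : ‖v‖ ^ 2 ≤ (K : ℝ) ^ 2 * ‖T v‖ ^ 2 := by
    nlinarith [norm_nonneg v, norm_nonneg (T v)]
  have hKne : ((K:ℝ)) ≠ 0 := ne_of_gt hK2
  have h11 : l * (1 / (2 * (K:ℝ) ^ 2)) / 2 * ((K:ℝ) ^ 2 * ‖T v‖ ^ 2) = l / 4 * ‖T v‖ ^ 2 := by
    field_simp
    ring
  have h12 := mul_le_mul_of_nonneg_left hineq
    (by positivity : (0:ℝ) ≤ l * (1 / (2 * (K:ℝ) ^ 2)) / 2)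
  rw [h11] at h12
  linarith
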